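/- Let f(x) = x(3/2 - x/2) for 0 ≤ x ≤ 1/2 and f(x) = x² for 1/2 < x ≤ 1 (i.e., f = f_{a,b} with a = 1/2, b = 1). Then f has a point of prime period 3, i.e., there exists x ∈ [0,1] with f³(x) = x and f(x) ≠ x. -/
import Mathlib


noncomputable def g (x : ℝ) : ℝ :=
  if x ≤ 1/2 then x * (3/2 - x/2) else x^2

theorem stmt18 : ∃ x ∈ Set.Icc (0:ℝ) 1, g^[3] x = x ∧ g x ≠ x := by
  set φ : ℝ → ℝ := fun x => ((x*(3-x)/2)*(3-(x*(3-x)/2))/2)^2 - x with hφ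
  have hcont : ContinuousOn φ (Set.Icc (0.35:ℝ) 0.37) := by fun_prop
  have h1 : (0.35:ℝ) ≤ 0.37 := by norm_num
  have hmem : (0:ℝ) ∈ Set.Icc (φ 0.35) (φ 0.37) := by
    constructor <;> simp only [hφ] <;> norm_num
  obtain ⟨x, hx, hx0⟩ := intermediate_value_Icc h1 hcont hmem
  obtain ⟨hxl, hxr⟩ := hx
  have hF : ((x*(3-x)/2)*(3-(x*(3-x)/2))/2)^2 = x := by
    have : φ x = 0 := hx0
    simp only [hφ] at this; linarith
  -- first step
  have hx12 : x ≤ 1/2 := by linarith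
  have hg1 : g x = x*(3-x)/2 := by
    simp only [g, if_pos hx12]; ring
  set y := x*(3-x)/2 with hy
  have hy12 : y ≤ 1/2 := by nlinarith
  have hg2 : g y = y*(3-y)/2 := by
    simp only [g, if_pos hy12]; ring
  set z := y*(3-y)/2 with hz
  have hz12 : ¬ (z ≤ 1/2) := by
    simp only [hz, hy]
    nlinarith [mul_nonneg (by linarith : (0:ℝ) ≤ x - 0.35) (by linarith : (0:ℝ) ≤ 0.37 - x),
      sq_nonneg (x - 0.35), sq_nonneg (0.37 - x), sq_nonneg (x - 0.36)]
  have hg3 : g z = z^2 := by simp only [g, if_neg hz12]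
  have hiter : g^[3] x = x := by
    show g (g (g x)) = x
    rw [hg1, hg2, hg3]
    exact hF
  refine ⟨x, ⟨by linarith, by linarith⟩, hiter, ?_⟩
  rw [hg1]
  intro h
  nlinarith
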